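/- For finitely supported functions λ, μ : I → ℂ, the H_I-modules M(1,λ) and M(1,μ) (defined via p_i = ∂/∂x_i, q_i = x_i, k = 1 on e^{λx}ℂ[x_i] and e^{μx}ℂ[x_i] respectively) are isomorphic if and only if λ = μ. -/

import Mathlib

/-- A level-one module for the Heisenberg Lie algebra `H_I` with basis
`{p_i, q_i, k | i ∈ I}`, relations `[p_i, q_j] = δ_{ij} k`, all other brackets zero,
where the central element `k` acts as the identity. -/
structure HeisenbergRep (I : Type) (W : Type) [AddCommGroup W] [Module ℂ W] where
  p : I → Module.End ℂ W
  q : I → Module.End ℂ W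
  comm_pp : ∀ i j, Commute (p i) (p j)
  comm_qq : ∀ i j, Commute (q i) (q j)
  comm_pq_same : ∀ i, p i * q i - q i * p i = 1
  comm_pq_ne : ∀ i j, i ≠ j → Commute (p i) (q j)

namespace HeisenbergRep

variable {I : Type} {W : Type} [AddCommGroup W] [Module ℂ W]

/-- A submodule stable under all the Heisenberg operators. -/
def Stable (ρ : HeisenbergRep I W) (S : Submodule ℂ W) : Prop :=
  (∀ i, ∀ w ∈ S, ρ.p i w ∈ S) ∧ (∀ i, ∀ w ∈ S, ρ.q i w ∈ S)

/-- `S` is a nonzero stable submodule with no proper nonzero stable submodule. -/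
def IsSimpleSub (ρ : HeisenbergRep I W) (S : Submodule ℂ W) : Prop :=
  ρ.Stable S ∧ S ≠ ⊥ ∧ ∀ T : Submodule ℂ W, ρ.Stable T → T ≤ S → T = ⊥ ∨ T = S

/-- Irreducibility of the representation. -/
def IsIrreducible (ρ : HeisenbergRep I W) : Prop := ρ.IsSimpleSub ⊤

/-- Restricted: for each vector `w`, `p_i w = 0` for all but finitely many `i`. -/
def Restricted (ρ : HeisenbergRep I W) : Prop :=
  ∀ w : W, {i : I | ρ.p i w ≠ 0}.Finite

/-- Isomorphism of Heisenberg representations. -/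
def Iso {W' : Type} [AddCommGroup W'] [Module ℂ W']
    (ρ : HeisenbergRep I W) (ρ' : HeisenbergRep I W') : Prop :=
  ∃ e : W ≃ₗ[ℂ] W', (∀ i w, e (ρ.p i w) = ρ'.p i (e w)) ∧
    (∀ i w, e (ρ.q i w) = ρ'.q i (e w))

end HeisenbergRep

/-- An endomorphism is locally finite if every vector lies in a
finitely generated (equivalently, finite-dimensional) stable subspace. -/
def Module.End.LocallyFinite {W : Type} [AddCommGroup W] [Module ℂ W]
    (T : Module.End ℂ W) : Prop :=
  ∀ w : W, ∃ S : Submodule ℂ W, w ∈ S ∧ S.FG ∧ ∀ v ∈ S, T v ∈ S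

/-- An endomorphism is locally nilpotent if every vector is killed by some power. -/
def Module.End.LocallyNilpotent {W : Type} [AddCommGroup W] [Module ℂ W]
    (T : Module.End ℂ W) : Prop :=
  ∀ w : W, ∃ n : ℕ, (T ^ n) w = 0

/-- The category `F`: restricted level-one modules on which every `p_i` is locally finite. -/
def HeisenbergRep.InCategoryF {I W : Type} [AddCommGroup W] [Module ℂ W]
    (ρ : HeisenbergRep I W) : Prop :=
  ρ.Restricted ∧ ∀ i, (ρ.p i).LocallyFinite

section M1

open MvPolynomial

variable {I : Type}

lemma pderiv_comm' [DecidableEq I] (i j : I) (f : MvPolynomial I ℂ) :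
    pderiv i (pderiv j f) = pderiv j (pderiv i f) := by
  induction f using MvPolynomial.induction_on' with
  | monomial s a =>
      simp only [pderiv_monomial]
      by_cases hij : i = j
      · subst hij; rfl
      · have h1 : ((s - Finsupp.single j 1 : I →₀ ℕ)) i = s i := by
          rw [Finsupp.tsub_apply, Finsupp.single_eq_of_ne hij, tsub_zero]
        have h2 : ((s - Finsupp.single i 1 : I →₀ ℕ)) j = s j := by
          rw [Finsupp.tsub_apply, Finsupp.single_eq_of_ne (Ne.symm hij), tsub_zero]
        rw [h1, h2, tsub_tsub, tsub_tsub, add_comm (Finsupp.single j 1)]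
        ring_nf
  | add p q hp hq => simp [hp, hq]

/-- The module `M(1,λ) = e^{λx} ℂ[x_i | i ∈ I]`, modelled on the polynomial ring
(`e^{λx} f ↔ f`), with `p_i = ∂/∂x_i` (which becomes `∂/∂x_i + λ_i` on the polynomial
part), `q_i` multiplication by `x_i`, and `k = 1`. -/
noncomputable def M1rep [DecidableEq I] (lam : I →₀ ℂ) :
    HeisenbergRep I (MvPolynomial I ℂ) where
  p i := (pderiv i).toLinearMap + lam i • (1 : Module.End ℂ (MvPolynomial I ℂ))
  q i := LinearMap.mulLeft ℂ (X i)
  comm_pp i j := by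
    apply LinearMap.ext; intro f
    simp [Module.End.mul_apply, pderiv_comm' i j, smul_eq_C_mul]
    ring
  comm_qq i j := by
    apply LinearMap.ext; intro f
    simp [Module.End.mul_apply]
    ring
  comm_pq_same i := by
    apply LinearMap.ext; intro f
    simp [Module.End.mul_apply, pderiv_mul, smul_eq_C_mul]
    ring
  comm_pq_ne i j hij := by
    apply LinearMap.ext; intro f
    simp [Module.End.mul_apply, pderiv_mul, pderiv_X_of_ne (Ne.symm hij), smul_eq_C_mul]
    ring

end M1

open MvPolynomial in
lemma pderiv_of_totalDegree_eq_zero {I : Type} [DecidableEq I] (i : I)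
    {f : MvPolynomial I ℂ} (hf : f.totalDegree = 0) : pderiv i f = 0 := by
  conv_lhs => rw [f.as_sum]
  rw [map_sum]
  refine Finset.sum_eq_zero fun v hv => ?_
  rw [pderiv_monomial, (totalDegree_eq_zero_iff I f).1 hf v hv i, Nat.cast_zero, mul_zero,
    map_zero]

open MvPolynomial in
lemma totalDegree_pderiv_le' {I : Type} [DecidableEq I] (i : I) (f : MvPolynomial I ℂ) :
    (pderiv i f).totalDegree ≤ f.totalDegree - 1 := by
  conv_lhs => rw [f.as_sum]
  rw [map_sum]
  refine (totalDegree_finset_sum _ _).trans (Finset.sup_le fun v hv => ?_)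
  rw [pderiv_monomial]
  by_cases hvi : v i = 0
  · simp [hvi]
  · refine (totalDegree_monomial_le _ _).trans ?_
    have hle : Finsupp.single i 1 ≤ v := by
      intro j
      by_cases hj : j = i
      · subst hj; simpa [Finsupp.single_eq_same] using Nat.one_le_iff_ne_zero.2 hvi
      · simp [Finsupp.single_eq_of_ne hj]
    have hv' : v - Finsupp.single i 1 + Finsupp.single i 1 = v :=
      tsub_add_cancel_of_le hle
    have hsum : v.sum (fun _ e => e) = (v - Finsupp.single i 1).sum (fun _ e => e) + 1 := by
      conv_lhs => rw [← hv']
      rw [Finsupp.sum_add_index' (fun _ => rfl) (fun _ _ _ => rfl),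
        Finsupp.sum_single_index rfl]
    have h2 : v.sum (fun _ e => e) ≤ f.totalDegree := le_totalDegree hv
    have : (v - Finsupp.single i 1).sum (fun _ => id) =
        (v - Finsupp.single i 1).sum (fun _ e => e) := rfl
    omega

open MvPolynomial in
lemma pderiv_pow_eq_zero' {I : Type} [DecidableEq I] (i : I) :
    ∀ (n : ℕ) (f : MvPolynomial I ℂ), f.totalDegree ≤ n →
      ((pderiv i).toLinearMap ^ (n + 1 : ℕ)) f = 0 := by
  intro n
  induction n with
  | zero =>
      intro f hf
      simpa using pderiv_of_totalDegree_eq_zero i (Nat.le_zero.1 hf)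
  | succ n ih =>
      intro f hf
      rw [pow_succ, Module.End.mul_apply]
      refine ih _ ?_
      have := totalDegree_pderiv_le' i f
      simp only [Derivation.coeFn_coe] at *
      omega

open MvPolynomial in
lemma eq_zero_of_pderiv_eq_smul {I : Type} [DecidableEq I] (i : I)
    {f : MvPolynomial I ℂ} {c : ℂ} (hc : c ≠ 0) (h : pderiv i f = c • f) : f = 0 := by
  have key : ∀ n : ℕ, ((pderiv i).toLinearMap ^ n) f = c ^ n • f := by
    intro n
    induction n with
    | zero => simp
    | succ n ih =>
        rw [pow_succ, Module.End.mul_apply]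
        simp only [Derivation.coeFn_coe]
        rw [h, map_smul, ih, smul_smul, ← pow_succ']
  have h0 := pderiv_pow_eq_zero' i f.totalDegree f le_rfl
  rw [key] at h0
  rcases smul_eq_zero.1 h0 with h1 | h1
  · exact absurd h1 (pow_ne_zero _ hc)
  · exact h1

open MvPolynomial in
/-- The `H_I`-modules `M(1,λ)` and `M(1,μ)` are isomorphic iff `λ = μ`. -/
theorem M1rep_iso_iff {I : Type} [Nonempty I] [DecidableEq I] (lam mu : I →₀ ℂ) :
    (M1rep lam).Iso (M1rep mu) ↔ lam = mu := by
  constructor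
  · rintro ⟨e, hp, _⟩
    ext i
    by_contra hne
    set g : MvPolynomial I ℂ := e 1 with hg
    have hgne : g ≠ 0 := by
      simp only [hg, ne_eq, LinearEquiv.map_eq_zero_iff]
      exact one_ne_zero
    have h1 := hp i 1
    have hL : (M1rep lam).p i (1 : MvPolynomial I ℂ) = lam i • 1 := by
      simp [M1rep, pderiv_one]
    have hR : (M1rep mu).p i g = pderiv i g + mu i • g := by
      simp [M1rep]
    rw [hL, map_smul, ← hg, hR] at h1
    have hgeq : pderiv i g = (lam i - mu i) • g := by
      rw [sub_smul, eq_sub_iff_add_eq]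
      exact h1.symm
    exact hgne (eq_zero_of_pderiv_eq_smul i (sub_ne_zero.2 hne) hgeq)
  · rintro rfl
    exact ⟨LinearEquiv.refl ℂ _, fun i w => rfl, fun i w => rfl⟩
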